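/- A graph is a partial k-tree if and only if it has treewidth at most k. -/

import Mathlib

open SimpleGraph

/-- A finite-style graph: a subgraph of the complete graph on `ℕ`,
i.e. a graph together with its vertex set `verts ⊆ ℕ`. -/
abbrev FGraph := SimpleGraph.Subgraph (⊤ : SimpleGraph ℕ)

/-- The complete graph on the vertex set `s`. -/
def cliqueGraph (s : Finset ℕ) : FGraph where
  verts := ↑s
  Adj u v := u ∈ s ∧ v ∈ s ∧ u ≠ v
  adj_sub h := h.2.2
  edge_vert h := h.1
  symm := ⟨by intro u v h; exact ⟨h.2.1, h.1, h.2.2.symm⟩⟩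

/-- Add a new vertex `v` to `G`, joined to the vertices of `s` (which are in `G`). -/
def addVertex (G : FGraph) (v : ℕ) (s : Finset ℕ) : FGraph where
  verts := insert v G.verts
  Adj x y := G.Adj x y ∨ (x = v ∧ y ≠ v ∧ y ∈ s ∧ y ∈ G.verts)
    ∨ (y = v ∧ x ≠ v ∧ x ∈ s ∧ x ∈ G.verts)
  adj_sub h := by
    rcases h with h | h | h
    · exact G.adj_sub h
    · exact fun e => h.2.1 (by rw [← e, h.1])
    · exact fun e => h.2.1 (by rw [e, h.1])
  edge_vert h := by
    rcases h with h | h | h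
    · exact Set.mem_insert_of_mem _ (G.edge_vert h)
    · exact h.1 ▸ Set.mem_insert _ _
    · exact Set.mem_insert_of_mem _ h.2.2.2
  symm := ⟨by
    intro x y h
    rcases h with h | h | h
    · exact Or.inl (G.adj_symm h)
    · exact Or.inr (Or.inr h)
    · exact Or.inr (Or.inl h)⟩

/-- `s` is a clique (of pairwise adjacent vertices) in `G`. -/
def IsCliqueIn (G : FGraph) (s : Finset ℕ) : Prop :=
  ↑s ⊆ G.verts ∧ ∀ u ∈ s, ∀ v ∈ s, u ≠ v → G.Adj u v

/-- `k`-trees: start from a `k`-clique and repeatedly add a vertex joined to an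
existing `k`-clique. -/
inductive IsKTree (k : ℕ) : FGraph → Prop
  | base (s : Finset ℕ) (hs : s.card = k) : IsKTree k (cliqueGraph s)
  | grow (G : FGraph) (hG : IsKTree k G) (s : Finset ℕ) (hs : s.card = k)
      (hclique : IsCliqueIn G s) (v : ℕ) (hv : v ∉ G.verts) :
      IsKTree k (addVertex G v s)

/-- A partial `k`-tree is a subgraph of a `k`-tree. -/
def IsPartialKTree (k : ℕ) (G : FGraph) : Prop := ∃ H : FGraph, IsKTree k H ∧ G ≤ H

/-- Add the single edge `uv` (and its endpoints) to `G`. -/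
def addEdge (G : FGraph) (u v : ℕ) : FGraph where
  verts := insert u (insert v G.verts)
  Adj x y := G.Adj x y ∨ (x = u ∧ y = v ∧ u ≠ v) ∨ (x = v ∧ y = u ∧ u ≠ v)
  adj_sub h := by
    rcases h with h | h | h
    · exact G.adj_sub h
    · exact fun e => h.2.2 (by rw [← h.1, ← h.2.1, e])
    · exact fun e => h.2.2 (by rw [← h.1, ← h.2.1, e])
  edge_vert h := by
    rcases h with h | h | h
    · exact Set.mem_insert_of_mem _ (Set.mem_insert_of_mem _ (G.edge_vert h))
    · exact h.1 ▸ Set.mem_insert _ _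
    · exact h.1 ▸ Set.mem_insert_of_mem _ (Set.mem_insert _ _)
  symm := ⟨by
    intro x y h
    rcases h with h | h | h
    · exact Or.inl (G.adj_symm h)
    · exact Or.inr (Or.inr ⟨h.2.1, h.1, h.2.2⟩)
    · exact Or.inr (Or.inl ⟨h.2.1, h.1, h.2.2⟩)⟩

/-- `G` is a minor of `H`: there are pairwise disjoint nonempty connected branch sets
in `H`, one for each vertex of `G`, with an `H`-edge between the branch sets of any
two `G`-adjacent vertices. -/
def IsMinor (G H : FGraph) : Prop :=
  ∃ β : ℕ → Finset ℕ,
    (∀ u ∈ G.verts, (β u).Nonempty ∧ ↑(β u) ⊆ H.verts ∧ (H.induce ↑(β u)).coe.Connected) ∧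
    (∀ u ∈ G.verts, ∀ v ∈ G.verts, u ≠ v → Disjoint (β u) (β v)) ∧
    (∀ u v, G.Adj u v → ∃ x ∈ β u, ∃ y ∈ β v, H.Adj x y)

/-- The complete graph `K₅`. -/
def K5g : FGraph := cliqueGraph {0, 1, 2, 3, 4}

/-- The complete bipartite graph `K₃,₃` with parts `{0,1,2}` and `{3,4,5}`. -/
def K33g : FGraph where
  verts := {n : ℕ | n < 6}
  Adj u v := (u < 3 ∧ 3 ≤ v ∧ v < 6) ∨ (v < 3 ∧ 3 ≤ u ∧ u < 6)
  adj_sub := fun {u v} h => by rcases h with h | h <;> exact show u ≠ v by omega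
  edge_vert := fun {u v} h => by rcases h with h | h <;> exact show u < 6 by omega
  symm := ⟨by intro u v h; tauto⟩

/-- Planarity via Wagner's theorem: no `K₅` and no `K₃,₃` minor. -/
def Planar (G : FGraph) : Prop := ¬ IsMinor K5g G ∧ ¬ IsMinor K33g G

/-- In a maximal planar graph (planar triangulation), the triangle `abc` bounds a face:
combinatorially, a new vertex can be placed inside it and joined to `a`, `b`, `c`
while preserving planarity. -/
def IsFaceTriangle (G : FGraph) (a b c : ℕ) : Prop :=
  G.Adj a b ∧ G.Adj b c ∧ G.Adj a c ∧
  ∀ v, v ∉ G.verts → Planar (addVertex G v {a, b, c})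

/-- A perfect elimination scheme witnessing that `H` is a `k`-tree: a listing of the
vertices of `H` whose first `k` entries form a clique and each later entry has exactly
`k` earlier neighbours, which form a clique. -/
def IsPESk (k : ℕ) (l : List ℕ) (H : FGraph) : Prop :=
  l.Nodup ∧ H.verts = {v | v ∈ l} ∧ k ≤ l.length ∧
  (∀ i j : Fin l.length, (i : ℕ) < k → (j : ℕ) < k → i ≠ j → H.Adj (l.get i) (l.get j)) ∧
  (∀ i : Fin l.length, k ≤ (i : ℕ) →
    ∃ s : Finset (Fin l.length), s.card = k ∧ (∀ j ∈ s, (j : ℕ) < (i : ℕ)) ∧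
      (∀ a ∈ s, ∀ b ∈ s, a ≠ b → H.Adj (l.get a) (l.get b)) ∧
      (∀ j : Fin l.length, (j : ℕ) < (i : ℕ) → (H.Adj (l.get j) (l.get i) ↔ j ∈ s)))

/-- A vertex is simplicial if its neighbourhood induces a clique. -/
def IsSimplicial (G : FGraph) (v : ℕ) : Prop :=
  v ∈ G.verts ∧ ∀ u w, G.Adj v u → G.Adj v w → u ≠ w → G.Adj u w

/-- A graph is chordal if it has no induced cycle of length greater than 3. -/
def IsChordal (G : FGraph) : Prop :=
  ∀ n : ℕ, 4 ≤ n → ¬ ∃ f : Fin n → ℕ, Function.Injective f ∧ (∀ i, f i ∈ G.verts) ∧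
    ∀ i j : Fin n, G.Adj (f i) (f j) ↔ ((i : ℕ) + 1) % n = (j : ℕ) ∨ ((j : ℕ) + 1) % n = (i : ℕ)

/-- A (general) perfect elimination scheme: an ordering of the vertices such that each
vertex is simplicial in the subgraph induced by it and the earlier vertices. -/
def IsPES (l : List ℕ) (G : FGraph) : Prop :=
  l.Nodup ∧ G.verts = {v | v ∈ l} ∧
  ∀ i : Fin l.length, IsSimplicial (G.induce {v | v ∈ l.take ((i : ℕ) + 1)}) (l.get i)

/-- `G` can be reduced to the empty graph by repeatedly deleting simplicial vertices. -/
inductive Reducible : FGraph → Prop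
  | empty (G : FGraph) (h : G.verts = ∅) : Reducible G
  | delete (G : FGraph) (v : ℕ) (hv : IsSimplicial G v)
      (h : Reducible (G.deleteVerts {v})) : Reducible G

/-- `G` is 3-connected: at least 4 vertices, and deleting any two vertices leaves it
connected. -/
def ThreeConnected (G : FGraph) : Prop :=
  4 ≤ G.verts.ncard ∧ ∀ S : Finset ℕ, S.card ≤ 2 → (G.deleteVerts ↑S).Connected

/-- `G` has a tree decomposition of width at most `k`. -/
def HasTreewidthLE (G : FGraph) (k : ℕ) : Prop :=
  ∃ (ι : Type) (T : SimpleGraph ι) (B : ι → Finset ℕ),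
    T.Connected ∧ T.IsAcyclic ∧
    (∀ v ∈ G.verts, ∃ i, v ∈ B i) ∧
    (∀ u v, G.Adj u v → ∃ i, u ∈ B i ∧ v ∈ B i) ∧
    (∀ v ∈ G.verts, (SimpleGraph.induce {i | v ∈ B i} T).Connected) ∧
    (∀ i, (B i).card ≤ k + 1)

/-- `G` is acyclic (a forest). -/
def AcyclicFG (G : FGraph) : Prop := G.coe.IsAcyclic

/-- `G` is a complete graph on its vertex set. -/
def CompleteFG (G : FGraph) : Prop := ∀ u ∈ G.verts, ∀ v ∈ G.verts, u ≠ v → G.Adj u v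

/-- The path on the three vertices `0, 1, 2`. -/
def P3 : FGraph := addEdge (addEdge (cliqueGraph ∅) 0 1) 1 2

section Basics

lemma FGraph.adj_ne {G : FGraph} {u v : ℕ} (h : G.Adj u v) : u ≠ v := G.adj_sub h

lemma IsCliqueIn.subset {G : FGraph} {s t : Finset ℕ} (h : IsCliqueIn G s) (hts : t ⊆ s) :
    IsCliqueIn G t :=
  ⟨fun x hx => h.1 (by exact_mod_cast hts (by exact_mod_cast hx)),
   fun u hu v hv huv => h.2 u (hts hu) v (hts hv) huv⟩

lemma IsCliqueIn.mono {G H : FGraph} {s : Finset ℕ} (h : IsCliqueIn G s) (hGH : G ≤ H) :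
    IsCliqueIn H s :=
  ⟨fun x hx => hGH.1 (h.1 hx), fun u hu v hv huv => hGH.2 (h.2 u hu v hv huv)⟩

lemma cliqueGraph_clique (s : Finset ℕ) : IsCliqueIn (cliqueGraph s) s :=
  ⟨fun x hx => hx, fun u hu v hv huv => ⟨hu, hv, huv⟩⟩

lemma le_addVertex (G : FGraph) (v : ℕ) (s : Finset ℕ) : G ≤ addVertex G v s :=
  ⟨Set.subset_insert _ _, fun {_ _} h => Or.inl h⟩

lemma addVertex_cliqueGraph (t : Finset ℕ) (v : ℕ) (hv : v ∉ t) :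
    addVertex (cliqueGraph t) v t = cliqueGraph (insert v t) := by
  apply SimpleGraph.Subgraph.ext
  · show insert v (↑t : Set ℕ) = ↑(insert v t)
    simp
  · ext x y
    show (x ∈ t ∧ y ∈ t ∧ x ≠ y) ∨ (x = v ∧ y ≠ v ∧ y ∈ t ∧ y ∈ t)
        ∨ (y = v ∧ x ≠ v ∧ x ∈ t ∧ x ∈ t) ↔ x ∈ insert v t ∧ y ∈ insert v t ∧ x ≠ y
    constructor
    · rintro (⟨h1, h2, h3⟩ | ⟨rfl, h2, h3, -⟩ | ⟨rfl, h2, h3, -⟩)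
      · exact ⟨Finset.mem_insert_of_mem h1, Finset.mem_insert_of_mem h2, h3⟩
      · exact ⟨Finset.mem_insert_self _ _, Finset.mem_insert_of_mem h3, Ne.symm h2⟩
      · exact ⟨Finset.mem_insert_of_mem h3, Finset.mem_insert_self _ _, h2⟩
    · rintro ⟨h1, h2, h3⟩
      rcases Finset.mem_insert.1 h1 with e1 | h1 <;> rcases Finset.mem_insert.1 h2 with e2 | h2
      · exact absurd (e1.trans e2.symm) h3
      · exact Or.inr (Or.inl ⟨e1, fun e => hv (e ▸ h2), h2, h2⟩)
      · exact Or.inr (Or.inr ⟨e2, fun e => hv (e ▸ h1), h1, h1⟩)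
      · exact Or.inl ⟨h1, h2, h3⟩

/-- A clique graph on at most `k+1` vertices (at least `k`) is a `k`-tree. -/
lemma isKTree_cliqueGraph (k : ℕ) (s : Finset ℕ) (h1 : k ≤ s.card) (h2 : s.card ≤ k + 1) :
    IsKTree k (cliqueGraph s) := by
  rcases eq_or_lt_of_le h1 with he | hlt
  · exact IsKTree.base s he.symm
  · have hcard : s.card = k + 1 := le_antisymm h2 hlt
    have hsne : s.Nonempty := Finset.card_pos.1 (by omega)
    obtain ⟨v, hv⟩ := hsne
    have hvne : v ∉ s.erase v := Finset.notMem_erase _ _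
    have := addVertex_cliqueGraph (s.erase v) v hvne
    rw [Finset.insert_erase hv] at this
    rw [← this]
    exact IsKTree.grow _ (IsKTree.base _ (by rw [Finset.card_erase_of_mem hv, hcard]; rfl))
      _ (by rw [Finset.card_erase_of_mem hv, hcard]; rfl) (cliqueGraph_clique _) v
      (by exact_mod_cast hvne)

end Basics

def GoodTD (k : ℕ) (H : FGraph) : Prop :=
  ∃ (ι : Type) (T : SimpleGraph ι) (B : ι → Finset ℕ),
    T.Connected ∧ T.IsAcyclic ∧
    (∀ v ∈ H.verts, ∃ i, v ∈ B i) ∧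
    (∀ u v, H.Adj u v → ∃ i, u ∈ B i ∧ v ∈ B i) ∧
    (∀ v ∈ H.verts, (SimpleGraph.induce {i | v ∈ B i} T).Connected) ∧
    (∀ i, (B i).card ≤ k + 1) ∧
    (∀ i, ↑(B i) ⊆ H.verts) ∧
    (∀ t : Finset ℕ, IsCliqueIn H t → ∃ i, ∀ x ∈ t, x ∈ B i)


section Walks
variable {α : Type} {G : SimpleGraph α}

/-- Lift a walk whose support lies in `A` to the induced subgraph on `A`. -/
lemma walk_toInduce {A : Set α} :
    ∀ {x y : α} (w : G.Walk x y), (∀ z ∈ w.support, z ∈ A) → ∀ (hx : x ∈ A) (hy : y ∈ A),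
    ∃ w' : (SimpleGraph.induce A G).Walk ⟨x, hx⟩ ⟨y, hy⟩,
      ∀ z ∈ w'.support, (z : α) ∈ w.support := by
  intro x y w
  induction w with
  | nil =>
    intro _ hx hy
    exact ⟨SimpleGraph.Walk.nil, by simp⟩
  | @cons a b c hab p ih =>
    intro hw hx hy
    have hb : b ∈ A := hw b (by simp)
    obtain ⟨w', hw'⟩ := ih (fun z hz => hw z (by simp [hz])) hb hy
    refine ⟨SimpleGraph.Walk.cons (by exact hab : (SimpleGraph.induce A G).Adj ⟨a, hx⟩ ⟨b, hb⟩) w',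
      ?_⟩
    intro z hz
    change _ ∈ _ :: w'.support at hz
    rcases List.mem_cons.1 hz with h | h
    · rw [h]; simp
    · simp only [SimpleGraph.Walk.support_cons, List.mem_cons]
      right
      exact hw' z h

/-- Get a walk in the ambient graph from a walk in an induced subgraph. -/
lemma walk_ofInduce {A : Set α} {x y : ↥A} (w : (SimpleGraph.induce A G).Walk x y) :
    ∃ w' : G.Walk ↑x ↑y, ∀ z ∈ w'.support, ∃ u : ↥A, u ∈ w.support ∧ ↑u = z := by
  induction w with
  | nil => exact ⟨SimpleGraph.Walk.nil, by simp⟩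
  | @cons a b c hab p ih =>
    obtain ⟨w', hw'⟩ := ih
    refine ⟨SimpleGraph.Walk.cons (by exact hab) w', ?_⟩
    intro z hz
    change _ ∈ _ :: w'.support at hz
    rcases List.mem_cons.1 hz with h | h
    · exact ⟨a, by simp, h.symm⟩
    · obtain ⟨u, hu, huz⟩ := hw' z h
      exact ⟨u, by simp [hu], huz⟩

lemma reachable_induce_of_walk {A : Set α} {x y : α} (w : G.Walk x y)
    (hw : ∀ z ∈ w.support, z ∈ A) (hx : x ∈ A) (hy : y ∈ A) :
    (SimpleGraph.induce A G).Reachable ⟨x, hx⟩ ⟨y, hy⟩ := by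
  obtain ⟨w', _⟩ := walk_toInduce w hw hx hy
  exact ⟨w'⟩

end Walks

section Leaf
variable {α : Type} {T : SimpleGraph α}

/-- Excise a leaf from a walk between two non-leaf vertices. -/
lemma exists_walk_avoid_leaf {l i0 : α} (hleaf : ∀ w, T.Adj l w → w = i0) :
    ∀ (n : ℕ) {x y : α} (w : T.Walk x y), w.length ≤ n → x ≠ l → y ≠ l →
    ∃ w' : T.Walk x y, (∀ z ∈ w'.support, z ∈ w.support) ∧ l ∉ w'.support := by
  intro n
  induction n with
  | zero =>
    intro x y w hw hx hy
    cases w with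
    | nil => exact ⟨SimpleGraph.Walk.nil, by simp, by simp; exact fun h => hx h.symm⟩
    | cons h p => simp [SimpleGraph.Walk.length_cons] at hw
  | succ n ih =>
    intro x y w hw hx hy
    cases w with
    | nil => exact ⟨SimpleGraph.Walk.nil, by simp, by simp; exact fun h => hx h.symm⟩
    | @cons _ b _ h p =>
      by_cases hb : b = l
      · subst hb
        have hxi : x = i0 := hleaf x h.symm
        cases p with
        | nil => exact absurd rfl hy
        | @cons _ c _ h2 q =>
          have hc : c = i0 := hleaf c h2
          have hq : q.length ≤ n := by
            have := hw
            simp [SimpleGraph.Walk.length_cons] at this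
            omega
          -- q : T.Walk c y with c = i0 = x
          have hcx : c = x := hc.trans hxi.symm
          subst hcx
          obtain ⟨w', hsub, hl⟩ := ih q (by omega) hx hy
          exact ⟨w', fun z hz => by
            simp only [SimpleGraph.Walk.support_cons, List.mem_cons]
            right; right
            exact hsub z hz, hl⟩
      · obtain ⟨w', hsub, hl⟩ := ih p (by
          simp [SimpleGraph.Walk.length_cons] at hw; omega) hb hy
        refine ⟨SimpleGraph.Walk.cons h w', ?_, ?_⟩
        · intro z hz
          rw [SimpleGraph.Walk.support_cons] at hz ⊢
          rcases List.mem_cons.1 hz with h' | h'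
          · exact h' ▸ List.mem_cons_self
          · exact List.mem_cons_of_mem _ (hsub z h')
        · rw [SimpleGraph.Walk.support_cons]
          intro hmem
          rcases List.mem_cons.1 hmem with h' | h'
          · exact hx h'.symm
          · exact hl h'

/-- A finite tree on at least two vertices has a leaf. -/
lemma exists_leaf [Fintype α] (hconn : T.Connected) (hacyc : T.IsAcyclic)
    (hcard : 2 ≤ Fintype.card α) :
    ∃ l i0 : α, T.Adj l i0 ∧ ∀ w, T.Adj l w → w = i0 := by
  classical
  have htree : T.IsTree := ⟨hconn, hacyc⟩
  have hedge : T.edgeFinset.card + 1 = Fintype.card α := htree.card_edgeFinset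
  have hdegpos : ∀ v : α, 0 < T.degree v := by
    intro v
    obtain ⟨w, hwne⟩ := Fintype.exists_ne_of_one_lt_card (by omega) v
    obtain ⟨p⟩ := hconn.preconnected v w
    cases p with
    | nil => exact absurd rfl hwne.symm
    | cons h q =>
      rw [← SimpleGraph.card_neighborFinset_eq_degree]
      exact Finset.card_pos.2 ⟨_, (SimpleGraph.mem_neighborFinset T v _).2 h⟩
  have hsum : ∑ v : α, T.degree v = 2 * T.edgeFinset.card :=
    SimpleGraph.sum_degrees_eq_twice_card_edges T
  have : ∃ v : α, T.degree v = 1 := by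
    by_contra hno
    push_neg at hno
    have h2 : ∀ v : α, 2 ≤ T.degree v := by
      intro v
      have h1 := hdegpos v
      have h3 := hno v
      omega
    have : 2 * Fintype.card α ≤ ∑ v : α, T.degree v := by
      calc 2 * Fintype.card α = ∑ _v : α, 2 := by simp [mul_comm]
        _ ≤ ∑ v : α, T.degree v := Finset.sum_le_sum (fun v _ => h2 v)
    omega
  obtain ⟨v, hv⟩ := this
  obtain ⟨i0, hi0⟩ := Finset.card_eq_one.1 (by rwa [← SimpleGraph.card_neighborFinset_eq_degree] at hv)
  refine ⟨v, i0, ?_, ?_⟩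
  · have : i0 ∈ T.neighborFinset v := hi0 ▸ Finset.mem_singleton_self _
    exact (SimpleGraph.mem_neighborFinset T v _).1 this
  · intro w hw
    have : w ∈ T.neighborFinset v := (SimpleGraph.mem_neighborFinset T v _).2 hw
    rw [hi0] at this
    exact Finset.mem_singleton.1 this

end Leaf

section AttachLeaf
variable {ι : Type}

/-- Attach a new leaf `none` to the tree `T`, joined to `i0`. -/
def attachLeaf (T : SimpleGraph ι) (i0 : ι) : SimpleGraph (Option ι) :=
  SimpleGraph.fromRel (fun a b =>
    (∃ x y, a = some x ∧ b = some y ∧ T.Adj x y) ∨ (a = none ∧ b = some i0))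

lemma attachLeaf_adj_some {T : SimpleGraph ι} {i0 a b : ι} :
    (attachLeaf T i0).Adj (some a) (some b) ↔ T.Adj a b := by
  simp only [attachLeaf, SimpleGraph.fromRel_adj]
  constructor
  · rintro ⟨hne, (⟨x, y, hx, hy, h⟩ | ⟨h, -⟩) | (⟨x, y, hx, hy, h⟩ | ⟨h, -⟩)⟩
    · cases hx; cases hy; exact h
    · exact absurd h (by simp)
    · cases hx; cases hy; exact h.symm
    · exact absurd h (by simp)
  · intro h
    exact ⟨by simpa using h.ne, Or.inl (Or.inl ⟨a, b, rfl, rfl, h⟩)⟩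

lemma attachLeaf_adj_none {T : SimpleGraph ι} {i0 : ι} {x : Option ι} :
    (attachLeaf T i0).Adj none x ↔ x = some i0 := by
  simp only [attachLeaf, SimpleGraph.fromRel_adj]
  constructor
  · rintro ⟨hne, (⟨a, b, ha, hb, h⟩ | ⟨-, h⟩) | (⟨a, b, ha, hb, h⟩ | ⟨h, h'⟩)⟩
    · exact absurd ha (by simp)
    · exact h
    · exact absurd hb (by simp)
    · exact absurd h' (by simp)
  · rintro rfl
    refine ⟨by simp, Or.inl (Or.inr ?_)⟩
    simp

lemma attachLeaf_connected {T : SimpleGraph ι} {i0 : ι} (h : T.Connected) :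
    (attachLeaf T i0).Connected := by
  have hsome : ∀ a b : ι, (attachLeaf T i0).Reachable (some a) (some b) := by
    intro a b
    obtain ⟨w⟩ := h.preconnected a b
    induction w with
    | nil => exact SimpleGraph.Reachable.refl _
    | cons hadj p ih =>
      exact (SimpleGraph.Adj.reachable (attachLeaf_adj_some.2 hadj)).trans ih
  constructor
  · intro x y
    match x, y with
    | none, none => exact SimpleGraph.Reachable.refl _
    | none, some b =>
      exact (SimpleGraph.Adj.reachable (attachLeaf_adj_none.2 rfl)).trans (hsome i0 b)
    | some a, none =>
      exact ((SimpleGraph.Adj.reachable (attachLeaf_adj_none.2 rfl)).trans (hsome i0 a)).symm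
    | some a, some b => exact hsome a b

/-- Lift a `none`-free walk in `attachLeaf T i0` to a walk in `T`. -/
lemma attachLeaf_lift {T : SimpleGraph ι} {i0 : ι} :
    ∀ {a b : ι} (w : (attachLeaf T i0).Walk (some a) (some b)), none ∉ w.support →
    ∃ w' : T.Walk a b, w'.edges.map (Sym2.map some) = w.edges ∧
      w'.support.map some = w.support := by
  intro a b w
  generalize hn : w.length = n
  induction n generalizing a b w with
  | zero =>
    cases w with
    | nil => exact fun _ => ⟨SimpleGraph.Walk.nil, by simp, by simp⟩
    | cons h p => simp at hn
  | succ n ih =>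
    cases w with
    | nil => simp at hn
    | @cons _ c _ h p =>
      intro hnone
      rw [SimpleGraph.Walk.support_cons] at hnone
      have hc : c ≠ none := fun e => hnone (List.mem_cons_of_mem _ (e ▸ p.start_mem_support))
      obtain ⟨c', rfl⟩ := Option.ne_none_iff_exists'.1 hc
      have hp : none ∉ p.support := fun e => hnone (List.mem_cons_of_mem _ e)
      obtain ⟨w', he, hs⟩ := ih p (by simpa using hn) hp
      exact ⟨SimpleGraph.Walk.cons (attachLeaf_adj_some.1 h) w', by
        simp [SimpleGraph.Walk.edges_cons, he], by
        simp [SimpleGraph.Walk.support_cons, hs]⟩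

lemma attachLeaf_acyclic {T : SimpleGraph ι} {i0 : ι} (h : T.IsAcyclic) :
    (attachLeaf T i0).IsAcyclic := by
  classical
  intro u c hc
  by_cases hnone : none ∈ c.support
  · -- rotate the cycle to start at `none`
    have hc' := hc.rotate hnone
    set c' := c.rotate _ hnone with hc'def
    clear_value c'
    cases c' with
    | nil => exact hc'.ne_nil rfl
    | @cons _ x _ h1 p =>
      have hx : x = some i0 := attachLeaf_adj_none.1 h1
      subst hx
      -- the last edge of p is also s(none, some i0)
      have hlast : s(none, some i0) ∈ p.edges := by
        have : p.reverse.length ≠ 0 := by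
          rw [SimpleGraph.Walk.length_reverse]
          intro h0
          have := SimpleGraph.Walk.eq_of_length_eq_zero h0
          simp at this
        cases hpr : p.reverse with
        | @cons _ z _ h2 q =>
          have hz : z = some i0 := attachLeaf_adj_none.1 h2
          subst hz
          have : s(none, some i0) ∈ p.reverse.edges := by
            rw [hpr, SimpleGraph.Walk.edges_cons]
            exact List.mem_cons_self
          rwa [SimpleGraph.Walk.edges_reverse, List.mem_reverse] at this
      have htrail := hc'.isTrail
      rw [SimpleGraph.Walk.isTrail_cons] at htrail
      exact htrail.2 hlast
  · -- `none`-free cycle lifts to T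
    have hu : u ≠ none := fun e => hnone (e ▸ c.start_mem_support)
    obtain ⟨u0, rfl⟩ := Option.ne_none_iff_exists'.1 hu
    obtain ⟨w', he, hs⟩ := attachLeaf_lift c hnone
    apply h w'
    have hinj : Function.Injective (Option.some : ι → Option ι) := Option.some_injective ι
    refine ⟨⟨?_, ?_⟩, ?_⟩
    · constructor
      have := hc.isTrail.edges_nodup
      rw [← he] at this
      exact this.of_map _
    · intro e
      subst e
      simp only [SimpleGraph.Walk.edges_nil] at he
      have h3 := hc.three_le_length
      have : c.edges.length = 0 := by rw [← he]; simp
      rw [SimpleGraph.Walk.length_edges] at this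
      omega
    · have h2 := hc.support_nodup
      rw [← hs] at h2
      rw [← List.map_tail] at h2
      exact h2.of_map _

lemma attachLeaf_reach_some {T : SimpleGraph ι} {i0 : ι} {S' : Set (Option ι)} :
    ∀ {i j : ι} (w : T.Walk i j), (∀ z ∈ w.support, some z ∈ S') →
    ∀ (hi : some i ∈ S') (hj : some j ∈ S'),
    (SimpleGraph.induce S' (attachLeaf T i0)).Reachable ⟨some i, hi⟩ ⟨some j, hj⟩ := by
  intro i j w
  induction w with
  | nil => intro _ _ _; rfl
  | @cons a b c hab p ihp =>
    intro hsup hi hj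
    have hb : some b ∈ S' := hsup b (by simp)
    have hadj : (SimpleGraph.induce S' (attachLeaf T i0)).Adj ⟨some a, hi⟩ ⟨some b, hb⟩ :=
      attachLeaf_adj_some.2 hab
    exact hadj.reachable.trans (ihp (fun z hz => hsup z (by simp [hz])) hb hj)

end AttachLeaf


section Helpers
variable {γ : Type} {W : SimpleGraph γ}

lemma connected_induce_of_unique {S : Set γ} {a : γ} (ha : a ∈ S) (h : ∀ b ∈ S, b = a) :
    (SimpleGraph.induce S W).Connected := by
  rw [SimpleGraph.connected_iff]
  constructor
  · intro x y
    have : x = y := Subtype.ext ((h x.1 x.2).trans (h y.1 y.2).symm)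
    rw [this]
  · exact ⟨⟨a, ha⟩⟩

lemma connected_bot_of_subsingleton [Subsingleton γ] [Nonempty γ] :
    (⊥ : SimpleGraph γ).Connected := by
  rw [SimpleGraph.connected_iff]
  constructor
  · intro x y
    rw [Subsingleton.elim x y]
  · infer_instance

lemma bot_isAcyclic' : (⊥ : SimpleGraph γ).IsAcyclic := by
  intro v c hc
  cases c with
  | nil => exact hc.ne_nil rfl
  | cons h p => exact h.elim

end Helpers

lemma ktree_goodTD {k : ℕ} {H : FGraph} (hH : IsKTree k H) : GoodTD k H := by
  induction hH with
  | base s hs =>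
    refine ⟨Unit, ⊥, fun _ => s, connected_bot_of_subsingleton, bot_isAcyclic', ?_, ?_, ?_, ?_, ?_, ?_⟩
    · intro v hv; exact ⟨(), hv⟩
    · intro u v huv; exact ⟨(), huv.1, huv.2.1⟩
    · intro v hv
      exact connected_induce_of_unique (a := ()) hv (fun b _ => rfl)
    · intro i; rw [hs]; omega
    · intro i x hx; exact hx
    · intro t ht; exact ⟨(), fun x hx => ht.1 hx⟩
  | grow G hG s hs hclique v hv ih =>
    obtain ⟨ι, T, B, hconn, hacyc, hcov, hedge, hbagconn, hcard, hbagsub, hcliquebag⟩ := ih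
    obtain ⟨i0, hi0⟩ := hcliquebag s hclique
    refine ⟨Option ι, attachLeaf T i0, fun o => o.elim (insert v s) B,
      attachLeaf_connected hconn, attachLeaf_acyclic hacyc, ?_, ?_, ?_, ?_, ?_, ?_⟩
    · -- vertex coverage
      rintro x hx
      rcases Set.mem_insert_iff.1 hx with rfl | hx
      · exact ⟨none, Finset.mem_insert_self _ _⟩
      · obtain ⟨i, hi⟩ := hcov x hx
        exact ⟨some i, hi⟩
    · -- edge coverage
      rintro x y (h | ⟨rfl, hy, hys, hyv⟩ | ⟨rfl, hx, hxs, hxv⟩)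
      · obtain ⟨i, hi⟩ := hedge x y h
        exact ⟨some i, hi⟩
      · exact ⟨none, Finset.mem_insert_self _ _, Finset.mem_insert_of_mem hys⟩
      · exact ⟨none, Finset.mem_insert_of_mem hxs, Finset.mem_insert_self _ _⟩
    · -- bag connectivity
      intro x hx
      by_cases hxv : x = v
      · subst hxv
        refine connected_induce_of_unique (a := none) (Finset.mem_insert_self _ _) ?_
        rintro (_ | i) hb
        · rfl
        · exact absurd (hbagsub i hb) hv
      · have hxG : x ∈ G.verts := by
          rcases Set.mem_insert_iff.1 hx with rfl | h
          · exact absurd rfl hxv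
          · exact h
        have hSconn := hbagconn x hxG
        -- helper: reach between some-nodes
        have hreach : ∀ (i j : ι) (hi : x ∈ B i) (hj : x ∈ B j),
            (SimpleGraph.induce {o : Option ι | x ∈ o.elim (insert v s) B} (attachLeaf T i0)).Reachable
              ⟨some i, hi⟩ ⟨some j, hj⟩ := by
          intro i j hi hj
          have hr := hSconn.preconnected ⟨i, hi⟩ ⟨j, hj⟩
          obtain ⟨w⟩ := hr
          obtain ⟨w', hw'⟩ := walk_ofInduce w
          have hsup : ∀ z ∈ w'.support, x ∈ B z := by
            intro z hz
            obtain ⟨u, hu, rfl⟩ := hw' z hz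
            exact u.2
          exact attachLeaf_reach_some w' (fun z hz => hsup z hz) hi hj
        rw [SimpleGraph.connected_iff]
        constructor
        · rintro ⟨o1, ho1⟩ ⟨o2, ho2⟩
          match o1, o2 with
          | none, none => rfl
          | none, some j =>
            have hxs : x ∈ s := by
              have := Finset.mem_insert.1 ho1
              tauto
            have hi0x : x ∈ B i0 := hi0 x hxs
            have hadj : (SimpleGraph.induce {o : Option ι | x ∈ o.elim (insert v s) B}
                (attachLeaf T i0)).Adj ⟨none, ho1⟩ ⟨some i0, hi0x⟩ :=
              attachLeaf_adj_none.2 rfl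
            exact hadj.reachable.trans (hreach i0 j hi0x ho2)
          | some i, none =>
            have hxs : x ∈ s := by
              have := Finset.mem_insert.1 ho2
              tauto
            have hi0x : x ∈ B i0 := hi0 x hxs
            have hadj : (SimpleGraph.induce {o : Option ι | x ∈ o.elim (insert v s) B}
                (attachLeaf T i0)).Adj ⟨none, ho2⟩ ⟨some i0, hi0x⟩ :=
              attachLeaf_adj_none.2 rfl
            exact ((hadj.reachable).trans (hreach i0 i hi0x ho1)).symm
          | some i, some j => exact hreach i j ho1 ho2
        · obtain ⟨i, hi⟩ := hcov x hxG
          exact ⟨⟨some i, hi⟩⟩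
    · -- card
      rintro (_ | i)
      · calc (insert v s).card ≤ s.card + 1 := Finset.card_insert_le _ _
          _ = k + 1 := by rw [hs]
      · exact hcard i
    · -- bags ⊆ verts
      rintro (_ | i) x hx
      · rcases Finset.mem_insert.1 hx with rfl | hx
        · exact Set.mem_insert _ _
        · exact Set.mem_insert_of_mem _ (hclique.1 hx)
      · exact Set.mem_insert_of_mem _ (hbagsub i hx)
    · -- cliques in bags
      intro t ht
      by_cases hvt : v ∈ t
      · refine ⟨none, ?_⟩
        intro x hx
        by_cases hxv : x = v
        · subst hxv; exact Finset.mem_insert_self _ _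
        · have hadj := ht.2 x hx v hvt hxv
          rcases hadj with h | ⟨rfl, _⟩ | ⟨_, _, hxs, _⟩
          · exact absurd (G.edge_vert (G.adj_symm h)) hv
          · exact absurd rfl hxv
          · exact Finset.mem_insert_of_mem hxs
      · have htG : IsCliqueIn G t := by
          constructor
          · intro x hx
            have hxt : x ∈ t := by exact_mod_cast hx
            have hxv : x ≠ v := fun e => hvt (e ▸ hxt)
            rcases Set.mem_insert_iff.1 (ht.1 hx) with e | h
            · exact absurd e hxv
            · exact h
          · intro a ha b hb hab
            rcases ht.2 a ha b hb hab with h | ⟨rfl, _⟩ | ⟨rfl, _⟩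
            · exact h
            · exact absurd ha hvt
            · exact absurd hb hvt
        obtain ⟨i, hi⟩ := hcliquebag t htG
        exact ⟨some i, hi⟩

lemma infinite_compl_finset (F : Finset ℕ) : ((↑F : Set ℕ)ᶜ).Infinite :=
  Set.Finite.infinite_compl (F.finite_toSet)

lemma backward_main (k : ℕ) :
    ∀ (N : ℕ) (G : FGraph), G.verts.Finite → ∀ (ι : Type) (_ : Fintype ι)
      (T : SimpleGraph ι) (B : ι → Finset ℕ),
      T.Connected → T.IsAcyclic →
      (∀ v ∈ G.verts, ∃ i, v ∈ B i) →
      (∀ u v, G.Adj u v → ∃ i, u ∈ B i ∧ v ∈ B i) →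
      (∀ v ∈ G.verts, (SimpleGraph.induce {i | v ∈ B i} T).Connected) →
      (∀ i, (B i).card ≤ k + 1) →
      (∀ i, ↑(B i) ⊆ G.verts) →
      Fintype.card ι + G.verts.ncard ≤ N →
      ∀ (F : Finset ℕ), (∀ x ∈ F, x ∉ G.verts) →
    ∃ H : FGraph, IsKTree k H ∧ G ≤ H ∧ (∀ x ∈ F, x ∉ H.verts) ∧
      (∀ t : Finset ℕ, t.card ≤ k → (∃ i, t ⊆ B i) →
        ∃ s : Finset ℕ, IsCliqueIn H s ∧ s.card = k ∧ t ⊆ s) := by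
  intro N
  induction N with
  | zero =>
    intro G hfin ι inst T B hconn hacyc hcov hedge hbagconn hcard hbagsub hN F hF
    have : 0 < Fintype.card ι := @Fintype.card_pos ι inst hconn.nonempty
    omega
  | succ N ihN =>
    intro G hfin ι inst T B hconn hacyc hcov hedge hbagconn hcard hbagsub hN F hF
    classical
    have hcardpos : 0 < Fintype.card ι := @Fintype.card_pos ι inst hconn.nonempty
    by_cases hone : Fintype.card ι = 1
    · -- single node
      obtain ⟨i0⟩ := hconn.nonempty
      have huniq : ∀ i : ι, i = i0 := by
        have hss : Subsingleton ι := Fintype.card_le_one_iff_subsingleton.1 (by omega)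
        intro i
        exact Subsingleton.elim i i0
      set B0 := B i0 with hB0
      have hGsub : G.verts ⊆ ↑B0 := by
        intro v hv
        obtain ⟨i, hi⟩ := hcov v hv
        rwa [huniq i] at hi
      by_cases hcase : B0.card ≤ k
      · obtain ⟨t, htsub, htcard⟩ :=
          Set.Infinite.exists_subset_card_eq (infinite_compl_finset (F ∪ B0)) (k - B0.card)
        have hdisj : Disjoint B0 t := by
          rw [Finset.disjoint_right]
          intro a hat haB
          exact htsub hat (by simp [haB])
        set s := B0 ∪ t with hsdef
        have hscard : s.card = k := by
          rw [Finset.card_union_of_disjoint hdisj, htcard]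
          omega
        refine ⟨cliqueGraph s, IsKTree.base s hscard, ⟨?_, ?_⟩, ?_, ?_⟩
        · intro x hx
          exact Finset.mem_coe.2 (Finset.mem_union_left _ (hGsub hx))
        · intro x y hxy
          obtain ⟨i, hi1, hi2⟩ := hedge x y hxy
          rw [huniq i] at hi1 hi2
          exact ⟨Finset.mem_union_left _ hi1, Finset.mem_union_left _ hi2, FGraph.adj_ne hxy⟩
        · intro x hxF hxs
          rcases Finset.mem_union.1 (Finset.mem_coe.1 hxs) with h | h
          · exact hF x hxF (hbagsub i0 h)
          · exact htsub h (by simp [hxF])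
        · intro t' ht'card ⟨i, ht'sub⟩
          rw [huniq i] at ht'sub
          exact ⟨s, cliqueGraph_clique s, hscard,
            fun x hx => Finset.mem_union_left _ (ht'sub hx)⟩
      · have hB0card : B0.card = k + 1 := le_antisymm (hcard i0) (by omega)
        refine ⟨cliqueGraph B0, isKTree_cliqueGraph k B0 (by omega) (by omega), ⟨?_, ?_⟩, ?_, ?_⟩
        · exact hGsub
        · intro x y hxy
          obtain ⟨i, hi1, hi2⟩ := hedge x y hxy
          rw [huniq i] at hi1 hi2
          exact ⟨hi1, hi2, FGraph.adj_ne hxy⟩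
        · intro x hxF hxs
          exact hF x hxF (hbagsub i0 hxs)
        · intro t' ht'card ⟨i, ht'sub⟩
          rw [huniq i] at ht'sub
          obtain ⟨u, hu1, hu2, hu3⟩ :=
            Finset.exists_subsuperset_card_eq ht'sub ht'card (by rw [hB0card]; omega)
          exact ⟨u, (cliqueGraph_clique B0).subset hu2, hu3, hu1⟩
    · -- at least two nodes: find a leaf
      obtain ⟨l, i0, hadj, hleaf⟩ := exists_leaf hconn hacyc (by omega)
      have hli0 : l ≠ i0 := hadj.ne
      -- key fact: a vertex in B l but not in B i0 is only in B l
      have factA : ∀ v ∈ G.verts, v ∈ B l → v ∉ B i0 → ∀ j, v ∈ B j → j = l := by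
        intro v hv hvl hvi0 j hvj
        by_contra hjl
        have hc := (hbagconn v hv).preconnected ⟨l, hvl⟩ ⟨j, hvj⟩
        obtain ⟨w⟩ := hc
        obtain ⟨w', hw'⟩ := walk_ofInduce w
        cases w' with
        | nil => exact hjl rfl
        | @cons _ b _ h p =>
          have hb : b = i0 := hleaf b h
          obtain ⟨u, hu, hval⟩ := hw' b (by
            rw [SimpleGraph.Walk.support_cons]
            exact List.mem_cons_of_mem _ p.start_mem_support)
          have hvb : v ∈ B b := by
            have := u.2
            rwa [hval] at this
          rw [hb] at hvb
          exact hvi0 hvb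
      by_cases hcase : ∃ v, v ∈ G.verts ∧ v ∈ B l ∧ v ∉ B i0
      · -- remove the vertex v
        obtain ⟨v, hvG, hvl, hvi0⟩ := hcase
        have honlyl := factA v hvG hvl hvi0
        set G' := G.deleteVerts {v} with hG'def
        have hvertseq : G'.verts = G.verts \ {v} := rfl
        have hfin' : G'.verts.Finite := hfin.subset (by rw [hvertseq]; exact Set.diff_subset)
        set B' : ι → Finset ℕ := fun i => (B i).erase v with hB'def
        have hset : ∀ u, u ≠ v → {i | u ∈ B' i} = {i | u ∈ B i} := by
          intro u hu
          ext i
          simp [hB'def, hu]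
        obtain ⟨H', hK', hle', havoid', hinv'⟩ := ihN G' hfin' ι inst T B' hconn hacyc
          (by
            rintro u ⟨huG, huv⟩
            simp only [Set.mem_singleton_iff] at huv
            obtain ⟨i, hi⟩ := hcov u huG
            exact ⟨i, Finset.mem_erase.2 ⟨huv, hi⟩⟩)
          (by
            intro x y hxy
            rw [SimpleGraph.Subgraph.deleteVerts_adj] at hxy
            obtain ⟨i, hi1, hi2⟩ := hedge x y hxy.2.2.2.2
            exact ⟨i, Finset.mem_erase.2 ⟨by simpa using hxy.2.1, hi1⟩,
              Finset.mem_erase.2 ⟨by simpa using hxy.2.2.2.1, hi2⟩⟩)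
          (by
            rintro u ⟨huG, huv⟩
            simp only [Set.mem_singleton_iff] at huv
            rw [hset u huv]
            exact hbagconn u huG)
          (fun i => le_trans (Finset.card_erase_le) (hcard i))
          (by
            intro i x hx
            have hxv := Finset.ne_of_mem_erase hx
            exact ⟨hbagsub i (Finset.mem_of_mem_erase hx), by simpa using hxv⟩)
          (by
            have h1 : G'.verts.ncard + 1 = G.verts.ncard := by
              rw [hvertseq]
              have := Set.ncard_diff_singleton_add_one hvG hfin
              omega
            omega)
          (insert v F)
          (by
            intro x hx
            rcases Finset.mem_insert.1 hx with rfl | hx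
            · rintro ⟨-, hbad⟩
              simp at hbad
            · rintro ⟨hxG, -⟩
              exact hF x hx hxG)
        have ht0 : ((B l).erase v).card ≤ k := by
          have := Finset.card_erase_of_mem hvl
          have := hcard l
          omega
        obtain ⟨sv, hsvclique, hsvcard, hsvsub⟩ := hinv' ((B l).erase v) ht0 ⟨l, le_refl _⟩
        have hvH' : v ∉ H'.verts := havoid' v (Finset.mem_insert_self _ _)
        have hvsv : v ∉ sv := fun h => hvH' (hsvclique.1 h)
        refine ⟨addVertex H' v sv, IsKTree.grow H' hK' sv hsvcard hsvclique v hvH',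
          ⟨?_, ?_⟩, ?_, ?_⟩
        · -- verts
          intro x hx
          by_cases hxv : x = v
          · subst hxv; exact Set.mem_insert _ _
          · exact Set.mem_insert_of_mem _ (hle'.1 ⟨hx, by simpa using hxv⟩)
        · -- edges
          intro x y hxy
          by_cases hxv : x = v
          · have hyv : y ≠ v := fun e => FGraph.adj_ne hxy (hxv.trans e.symm)
            obtain ⟨i, hi1, hi2⟩ := hedge _ _ hxy
            have hil : i = l := honlyl i (hxv ▸ hi1)
            have hyG : y ∈ G.verts := G.edge_vert (G.adj_symm hxy)
            refine Or.inr (Or.inl ⟨hxv, hyv, hsvsub (Finset.mem_erase.2 ⟨hyv, hil ▸ hi2⟩), ?_⟩)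
            exact hle'.1 ⟨hyG, by simpa using hyv⟩
          · by_cases hyv : y = v
            · obtain ⟨i, hi1, hi2⟩ := hedge _ _ hxy
              have hil : i = l := honlyl i (hyv ▸ hi2)
              have hxG : x ∈ G.verts := G.edge_vert hxy
              refine Or.inr (Or.inr ⟨hyv, hxv, hsvsub (Finset.mem_erase.2 ⟨hxv, hil ▸ hi1⟩), ?_⟩)
              exact hle'.1 ⟨hxG, by simpa using hxv⟩
            · refine Or.inl (hle'.2 ?_)
              rw [SimpleGraph.Subgraph.deleteVerts_adj]
              exact ⟨G.edge_vert hxy, by simpa using hxv, G.edge_vert (G.adj_symm hxy),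
                by simpa using hyv, hxy⟩
        · -- avoid F
          intro x hxF
          have hxv : x ≠ v := fun e => hF x hxF (e ▸ hvG)
          intro hx
          rcases Set.mem_insert_iff.1 hx with e | hx
          · exact hxv e
          · exact havoid' x (Finset.mem_insert_of_mem hxF) hx
        · -- invariant
          intro t htcard ⟨i, htsub⟩
          by_cases hvt : v ∈ t
          · have hil : i = l := honlyl i (htsub hvt)
            subst hil
            -- the big clique insert v sv
            have hbig : IsCliqueIn (addVertex H' v sv) (insert v sv) := by
              constructor
              · intro x hx
                rcases Finset.mem_insert.1 (Finset.mem_coe.1 hx) with rfl | hx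
                · exact Set.mem_insert _ _
                · exact Set.mem_insert_of_mem _ (hsvclique.1 hx)
              · intro a ha b hb hab
                rcases Finset.mem_insert.1 ha with ha' | ha'
                · rcases Finset.mem_insert.1 hb with hb' | hb'
                  · exact absurd (ha'.trans hb'.symm) hab
                  · exact Or.inr (Or.inl ⟨ha', fun e => hvsv (e ▸ hb'), hb', hsvclique.1 hb'⟩)
                · rcases Finset.mem_insert.1 hb with hb' | hb'
                  · exact Or.inr (Or.inr ⟨hb', fun e => hvsv (e ▸ ha'), ha', hsvclique.1 ha'⟩)
                  · exact Or.inl (hsvclique.2 a ha' b hb' hab)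
            have htsub2 : t ⊆ insert v sv := by
              intro x hx
              by_cases hxv : x = v
              · subst hxv; exact Finset.mem_insert_self _ _
              · exact Finset.mem_insert_of_mem
                  (hsvsub (Finset.mem_erase.2 ⟨hxv, htsub hx⟩))
            have hbigcard : (insert v sv).card = k + 1 := by
              rw [Finset.card_insert_of_notMem hvsv, hsvcard]
            obtain ⟨u, hu1, hu2, hu3⟩ :=
              Finset.exists_subsuperset_card_eq htsub2 htcard (by omega)
            exact ⟨u, hbig.subset hu2, hu3, hu1⟩
          · have : t ⊆ B' i := by
              intro x hx
              exact Finset.mem_erase.2 ⟨fun e => hvt (e ▸ hx), htsub hx⟩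
            obtain ⟨s, hsclique, hscard, hssub⟩ := hinv' t htcard ⟨i, this⟩
            exact ⟨s, hsclique.mono (le_addVertex H' v sv), hscard, hssub⟩
      · -- leaf bag is redundant: drop the leaf
        push_neg at hcase
        have hsubl : ∀ x ∈ B l, x ∈ B i0 := by
          intro x hx
          exact hcase x (hbagsub l hx) hx
        set A : Set ι := {i | i ≠ l} with hAdef
        have hi0A : i0 ∈ A := Ne.symm hli0
        haveI : Fintype ↥A := Fintype.ofFinite ↥A
        have hcardA : Fintype.card ↥A + 1 = Fintype.card ι := by
          have : Fintype.card ↥A = Fintype.card {i : ι // ¬ (i = l)} := by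
            apply Fintype.card_congr
            exact Equiv.refl _
          rw [this, Fintype.card_subtype_compl]
          have : Fintype.card {i : ι // i = l} = 1 := Fintype.card_subtype_eq l
          rw [this]
          omega
        set T' := SimpleGraph.induce A T with hT'def
        set B'' : ↥A → Finset ℕ := fun i => B ↑i with hB''def
        -- excision of walks
        have hexcise : ∀ (x y : ι) (w : T.Walk x y), x ≠ l → y ≠ l →
            ∃ w' : T.Walk x y, (∀ z ∈ w'.support, z ∈ w.support) ∧ l ∉ w'.support :=
          fun x y w hx hy => exists_walk_avoid_leaf hleaf w.length w (le_refl _) hx hy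
        obtain ⟨H, hK, hle, havoid, hinv⟩ := ihN G hfin ↥A _ T' B''
          (by
            rw [SimpleGraph.connected_iff]
            refine ⟨?_, ⟨⟨i0, hi0A⟩⟩⟩
            rintro ⟨x, hx⟩ ⟨y, hy⟩
            obtain ⟨w⟩ := hconn.preconnected x y
            obtain ⟨w', hsub, hl⟩ := hexcise x y w hx hy
            exact reachable_induce_of_walk w' (fun z hz => (fun e => hl (e ▸ hz) : z ≠ l)) hx hy)
          (by
            intro u c hc
            have hinj : Function.Injective (fun a : ↥A => (a : ι)) := Subtype.val_injective
            have := SimpleGraph.Walk.map_isCycle_iff_of_injective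
              (f := ⟨fun a : ↥A => (a : ι), fun {a b} h => h⟩) (p := c) hinj
            exact hacyc _ (this.2 hc))
          (by
            intro u hu
            obtain ⟨i, hi⟩ := hcov u hu
            by_cases hil : i = l
            · subst hil
              exact ⟨⟨i0, hi0A⟩, hsubl u hi⟩
            · exact ⟨⟨i, hil⟩, hi⟩)
          (by
            intro x y hxy
            obtain ⟨i, hi1, hi2⟩ := hedge x y hxy
            by_cases hil : i = l
            · subst hil
              exact ⟨⟨i0, hi0A⟩, hsubl x hi1, hsubl y hi2⟩
            · exact ⟨⟨i, hil⟩, hi1, hi2⟩)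
          (by
            intro u hu
            rw [SimpleGraph.connected_iff]
            constructor
            · rintro ⟨⟨x, hxA⟩, hx⟩ ⟨⟨y, hyA⟩, hy⟩
              have hr := (hbagconn u hu).preconnected ⟨x, hx⟩ ⟨y, hy⟩
              obtain ⟨w⟩ := hr
              obtain ⟨w', hw'⟩ := walk_ofInduce w
              have hsup : ∀ z ∈ w'.support, u ∈ B z := by
                intro z hz
                obtain ⟨uu, huu, rfl⟩ := hw' z hz
                exact uu.2
              obtain ⟨w'', hsub'', hl''⟩ := hexcise x y w' hxA hyA
              obtain ⟨w3, hw3⟩ := walk_toInduce (A := A) w''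
                (fun z hz => (fun e => hl'' (e ▸ hz) : z ≠ l)) hxA hyA
              obtain ⟨w4, _⟩ := walk_toInduce (G := T') (A := {i : ↥A | u ∈ B'' i}) w3
                (by
                  intro z hz
                  have : (z : ι) ∈ w''.support := hw3 z hz
                  exact hsup _ (hsub'' _ this))
                hx hy
              exact ⟨w4⟩
            · obtain ⟨i, hi⟩ := hcov u hu
              by_cases hil : i = l
              · subst hil
                exact ⟨⟨⟨i0, hi0A⟩, hsubl u hi⟩⟩
              · exact ⟨⟨⟨i, hil⟩, hi⟩⟩)
          (fun i => hcard ↑i)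
          (fun i => hbagsub ↑i)
          (by omega)
          F hF
        refine ⟨H, hK, hle, havoid, ?_⟩
        intro t htcard ⟨i, htsub⟩
        by_cases hil : i = l
        · subst hil
          exact hinv t htcard ⟨⟨i0, hi0A⟩, fun x hx => hsubl x (htsub hx)⟩
        · exact hinv t htcard ⟨⟨i, hil⟩, htsub⟩

lemma backward_dir {k : ℕ} {G : FGraph} (hfin : G.verts.Finite) (h : HasTreewidthLE G k) :
    IsPartialKTree k G := by
  classical
  obtain ⟨ι, T, B0, hconn, hacyc, hcov, hedge, hbagconn, hcard⟩ := h
  by_cases hempty : G.verts = ∅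
  · refine ⟨cliqueGraph (Finset.range k), IsKTree.base _ (Finset.card_range k), ?_, ?_⟩
    · rw [hempty]; exact Set.empty_subset _
    · intro x y hxy
      exact absurd (G.edge_vert hxy) (by rw [hempty]; exact Set.notMem_empty x)
  · obtain ⟨v0, hv0⟩ := Set.nonempty_iff_ne_empty.2 hempty
    -- intersect bags with the vertex set
    set B : ι → Finset ℕ := fun i => B0 i ∩ hfin.toFinset with hBdef
    have hBsub : ∀ i, ↑(B i) ⊆ G.verts := by
      intro i x hx
      have := (Finset.mem_inter.1 hx).2
      rwa [Set.Finite.mem_toFinset] at this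
    have hBmem : ∀ v ∈ G.verts, ∀ i, (v ∈ B i ↔ v ∈ B0 i) := by
      intro v hv i
      simp [hBdef, Set.Finite.mem_toFinset, hv]
    have hcov' : ∀ v ∈ G.verts, ∃ i, v ∈ B i := by
      intro v hv
      obtain ⟨i, hi⟩ := hcov v hv
      exact ⟨i, (hBmem v hv i).2 hi⟩
    have hedge' : ∀ u v, G.Adj u v → ∃ i, u ∈ B i ∧ v ∈ B i := by
      intro u v huv
      obtain ⟨i, h1, h2⟩ := hedge u v huv
      exact ⟨i, (hBmem u (G.edge_vert huv) i).2 h1,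
        (hBmem v (G.edge_vert (G.adj_symm huv)) i).2 h2⟩
    have hbagset : ∀ v ∈ G.verts, {i | v ∈ B i} = {i | v ∈ B0 i} := by
      intro v hv
      ext i
      exact hBmem v hv i
    -- choice functions for nodes
    have hv0cov := hcov' v0 hv0
    set f : ℕ → ι := fun v => if h : v ∈ G.verts then (hcov' v h).choose
      else hv0cov.choose with hfdef
    have hf : ∀ v (h : v ∈ G.verts), v ∈ B (f v) := by
      intro v h
      simp only [hfdef, dif_pos h]
      exact (hcov' v h).choose_spec
    set g : ℕ → ℕ → ι := fun u v => if h : G.Adj u v then (hedge' u v h).choose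
      else hv0cov.choose with hgdef
    have hg : ∀ u v (h : G.Adj u v), u ∈ B (g u v) ∧ v ∈ B (g u v) := by
      intro u v h
      simp only [hgdef, dif_pos h]
      exact (hedge' u v h).choose_spec
    set I0 : Set ι := f '' G.verts ∪ (fun p : ℕ × ℕ => g p.1 p.2) '' {p | G.Adj p.1 p.2} with hI0def
    have hI0fin : I0.Finite := by
      apply Set.Finite.union
      · exact hfin.image f
      · apply Set.Finite.image
        have hsub : {p : ℕ × ℕ | G.Adj p.1 p.2} ⊆ G.verts ×ˢ G.verts := by
          rintro ⟨a, b⟩ hab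
          exact ⟨G.edge_vert hab, G.edge_vert (G.adj_symm hab)⟩
        exact (hfin.prod hfin).subset hsub
    set W : ∀ a b : ι, T.Walk a b := fun a b => Classical.choice (hconn.preconnected a b)
      with hWdef
    set hull : Set ι := ⋃ (a ∈ I0) (b ∈ I0), {z | z ∈ (W a b).support} with hhulldef
    have hhullfin : hull.Finite := by
      apply Set.Finite.biUnion hI0fin
      intro a _
      apply Set.Finite.biUnion hI0fin
      intro b _
      exact (W a b).support.finite_toSet
    have hI0hull : I0 ⊆ hull := by
      intro a ha
      rw [hhulldef]
      simp only [Set.mem_iUnion]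
      exact ⟨a, ha, a, ha, (W a a).start_mem_support⟩
    have hmemhull : ∀ z, z ∈ hull ↔ ∃ a ∈ I0, ∃ b ∈ I0, z ∈ (W a b).support := by
      intro z
      rw [hhulldef]
      simp only [Set.mem_iUnion, Set.mem_setOf_eq]
      tauto
    have hwalkhull : ∀ x ∈ hull, ∀ y ∈ hull,
        ∃ w : T.Walk x y, ∀ z ∈ w.support, z ∈ hull := by
      intro x hx y hy
      obtain ⟨a, ha, b, hb, hxs⟩ := (hmemhull x).1 hx
      obtain ⟨c, hc, d, hd, hys⟩ := (hmemhull y).1 hy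
      refine ⟨((W a b).dropUntil x hxs).append ((W b c).append ((W c d).takeUntil y hys)), ?_⟩
      intro z hz
      rw [SimpleGraph.Walk.mem_support_append_iff] at hz
      rcases hz with hz | hz
      · have := SimpleGraph.Walk.support_dropUntil_subset _ hxs hz
        exact (hmemhull z).2 ⟨a, ha, b, hb, this⟩
      · rw [SimpleGraph.Walk.mem_support_append_iff] at hz
        rcases hz with hz | hz
        · exact (hmemhull z).2 ⟨b, hb, c, hc, hz⟩
        · have := SimpleGraph.Walk.support_takeUntil_subset _ hys hz
          exact (hmemhull z).2 ⟨c, hc, d, hd, this⟩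
    haveI : Fintype ↥hull := hhullfin.fintype
    have hfI0 : ∀ v ∈ G.verts, f v ∈ I0 := by
      intro v hv
      exact Or.inl ⟨v, hv, rfl⟩
    have hgI0 : ∀ u v, G.Adj u v → g u v ∈ I0 := by
      intro u v h
      exact Or.inr ⟨(u, v), h, rfl⟩
    -- the finite decomposition
    have hpath_unique := SimpleGraph.isAcyclic_iff_path_unique.1 hacyc
    obtain ⟨H, hK, hle, -, -⟩ := backward_main k (Fintype.card ↥hull + G.verts.ncard) G hfin
      ↥hull _ (SimpleGraph.induce hull T) (fun i => B ↑i)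
      (by
        rw [SimpleGraph.connected_iff]
        constructor
        · rintro ⟨x, hx⟩ ⟨y, hy⟩
          obtain ⟨w, hw⟩ := hwalkhull x hx y hy
          exact reachable_induce_of_walk w hw hx hy
        · exact ⟨⟨f v0, hI0hull (hfI0 v0 hv0)⟩⟩)
      (by
        intro u c hc
        have hinj : Function.Injective (fun a : ↥hull => (a : ι)) := Subtype.val_injective
        have := SimpleGraph.Walk.map_isCycle_iff_of_injective
          (f := ⟨fun a : ↥hull => (a : ι), fun {a b} h => h⟩) (p := c) hinj
        exact hacyc _ (this.2 hc))
      (by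
        intro v hv
        exact ⟨⟨f v, hI0hull (hfI0 v hv)⟩, hf v hv⟩)
      (by
        intro u v huv
        exact ⟨⟨g u v, hI0hull (hgI0 u v huv)⟩, (hg u v huv).1, (hg u v huv).2⟩)
      (by
        intro v hv
        rw [SimpleGraph.connected_iff]
        constructor
        · rintro ⟨⟨x, hxhull⟩, hx⟩ ⟨⟨y, hyhull⟩, hy⟩
          -- x, y ∈ hull with v ∈ B x, v ∈ B y
          have hx' : v ∈ B0 x := (hBmem v hv x).1 hx
          have hy' : v ∈ B0 y := (hBmem v hv y).1 hy
          obtain ⟨w⟩ := (hbagconn v hv).preconnected ⟨x, hx'⟩ ⟨y, hy'⟩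
          obtain ⟨w1, hw1⟩ := walk_ofInduce w
          have hw1sup : ∀ z ∈ w1.support, v ∈ B0 z := by
            intro z hz
            obtain ⟨uu, huu, rfl⟩ := hw1 z hz
            exact uu.2
          obtain ⟨w2, hw2⟩ := hwalkhull x hxhull y hyhull
          -- both toPaths are the unique path
          have hpeq : w1.toPath = w2.toPath := hpath_unique _ _
          have hsup : ∀ z ∈ (w1.toPath : T.Walk x y).support, v ∈ B z ∧ z ∈ hull := by
            intro z hz
            constructor
            · exact (hBmem v hv z).2 (hw1sup z (w1.support_toPath_subset hz))
            · rw [hpeq] at hz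
              exact hw2 z (w2.support_toPath_subset hz)
          obtain ⟨w3, hw3⟩ := walk_toInduce (A := hull) (w1.toPath : T.Walk x y)
            (fun z hz => (hsup z hz).2) hxhull hyhull
          obtain ⟨w4, -⟩ := walk_toInduce (G := SimpleGraph.induce hull T)
            (A := {i : ↥hull | v ∈ B ↑i}) w3
            (by
              intro z hz
              exact (hsup ↑z (hw3 z hz)).1)
            hx hy
          exact ⟨w4⟩
        · exact ⟨⟨⟨f v, hI0hull (hfI0 v hv)⟩, hf v hv⟩⟩)
      (fun i => le_trans (Finset.card_le_card (Finset.inter_subset_left)) (hcard ↑i))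
      (fun i => hBsub ↑i)
      (le_refl _)
      ∅ (by simp)
    exact ⟨H, hK, hle⟩

theorem partial_ktree_iff_treewidth (k : ℕ) (G : FGraph) (hfin : G.verts.Finite) :
    IsPartialKTree k G ↔ HasTreewidthLE G k := by
  constructor
  · rintro ⟨H, hK, hle⟩
    obtain ⟨ι, T, B, hconn, hacyc, hcov, hedge, hbagconn, hcard, hbagsub, -⟩ := ktree_goodTD hK
    exact ⟨ι, T, B, hconn, hacyc,
      fun v hv => hcov v (hle.1 hv),
      fun u v huv => hedge u v (hle.2 huv),
      fun v hv => hbagconn v (hle.1 hv),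
      hcard⟩
  · exact backward_dir hfin
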